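/- Under the cover assumptions, if f ∈ ℓ²(G) satisfies Ψ_j(f) = 0 for all j ∈ J, then ‖f‖² ≤ Σ_j (θ_j/λ_{1,j}) ‖∇_j f_j‖², and consequently ‖f‖² ≤ (Θ/Λ) ⟨f, Lf⟩ where Θ = sup_j θ_j and Λ = inf_j λ_{1,j}. -/

import Mathlib

open Finset

noncomputable def lap {V : Type*} [Fintype V] (w : V → V → ℝ) (f : V → ℂ) : V → ℂ :=
  fun v => ∑ u, (f v - f u) * (w v u : ℂ)

noncomputable def gip {V : Type*} [Fintype V] (f g : V → ℂ) : ℂ :=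
  ∑ v, f v * (starRingEnd ℂ) (g v)

noncomputable def gradSq {V : Type*} [Fintype V] (w : V → V → ℝ) (f : V → ℂ) : ℝ :=
  (1 / 2) * ∑ u, ∑ v, ‖f u - f v‖ ^ 2 * w u v

noncomputable def normSq {V : Type*} [Fintype V] (f : V → ℂ) : ℝ := ∑ v, ‖f v‖ ^ 2

/-- The squared weighted gradient norm of the subgraph induced on `S`
(only edges with both ends in `S`). -/
noncomputable def gradSqOn {V : Type*} (w : V → V → ℝ) (S : Finset V) (f : V → ℂ) : ℝ :=
  (1 / 2) * ∑ u ∈ S, ∑ v ∈ S, ‖f u - f v‖ ^ 2 * w u v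

/-- `μ` is an eigenvalue of the Laplacian of the subgraph induced on `S`. -/
def IsEigenOn {V : Type*} (w : V → V → ℝ) (S : Finset V) (μ : ℝ) : Prop :=
  ∃ g : V → ℂ, g ≠ 0 ∧ (∀ v, v ∉ S → g v = 0) ∧
    ∀ v ∈ S, ∑ u ∈ S, (g v - g u) * (w v u : ℂ) = (μ : ℂ) * g v

/-- The functional `Ψ(f) = ⟨f, ψ⟩` computed over `S`. -/
noncomputable def PsiOn {V : Type*} (S : Finset V) (ψ f : V → ℂ) : ℂ :=
  ∑ v ∈ S, f v * (starRingEnd ℂ) (ψ v)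

/-- The induced subgraph on `S` (edges of nonzero weight inside `S`) is connected. -/
def IndConnected {V : Type*} (w : V → V → ℝ) (S : Finset V) : Prop :=
  (SimpleGraph.fromRel fun u v : {x : V // x ∈ S} => w u.1 v.1 ≠ 0).Connected

lemma quad_id {V : Type*} (w : V → V → ℝ) (hsym : ∀ u v, w u v = w v u)
    (S : Finset V) (f : V → ℂ) :
    ∑ v ∈ S, (starRingEnd ℂ) (f v) * (∑ u ∈ S, (f v - f u) * (w v u : ℂ))
      = ((gradSqOn w S f : ℝ) : ℂ) := by
  have hswap : ∑ v ∈ S, ∑ u ∈ S, (starRingEnd ℂ) (f v) * ((f v - f u) * (w v u : ℂ))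
      = ∑ v ∈ S, ∑ u ∈ S, (starRingEnd ℂ) (f u) * ((f u - f v) * (w v u : ℂ)) := by
    rw [Finset.sum_comm]
    refine Finset.sum_congr rfl fun v hv => Finset.sum_congr rfl fun u hu => ?_
    rw [hsym u v]
  have key : (2 : ℂ) * ∑ v ∈ S, ∑ u ∈ S, (starRingEnd ℂ) (f v) * ((f v - f u) * (w v u : ℂ))
      = ∑ v ∈ S, ∑ u ∈ S, ((‖f v - f u‖^2 : ℝ) : ℂ) * (w v u : ℂ) := by
    rw [two_mul]
    nth_rewrite 2 [hswap]
    rw [← Finset.sum_add_distrib]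
    refine Finset.sum_congr rfl fun v hv => ?_
    rw [← Finset.sum_add_distrib]
    refine Finset.sum_congr rfl fun u hu => ?_
    have h1 : ((‖f v - f u‖^2 : ℝ) : ℂ) = (starRingEnd ℂ) (f v - f u) * (f v - f u) := by
      exact_mod_cast (RCLike.conj_mul (f v - f u)).symm
    rw [h1]
    simp only [map_sub]
    ring
  simp_rw [Finset.mul_sum]
  have h2 : ((gradSqOn w S f : ℝ) : ℂ)
      = (1/2) * ∑ v ∈ S, ∑ u ∈ S, ((‖f v - f u‖^2 : ℝ) : ℂ) * (w v u : ℂ) := by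
    rw [gradSqOn]
    push_cast
    ring
  rw [h2, ← key]
  ring

lemma gradSqOn_nonneg {V : Type*} (w : V → V → ℝ) (hnn : ∀ u v, 0 ≤ w u v)
    (S : Finset V) (f : V → ℂ) : 0 ≤ gradSqOn w S f := by
  apply mul_nonneg (by norm_num)
  exact Finset.sum_nonneg fun u _ => Finset.sum_nonneg fun v _ =>
    mul_nonneg (sq_nonneg _) (hnn u v)

lemma eigen_nonneg {V : Type*} (w : V → V → ℝ) (hsym : ∀ u v, w u v = w v u)
    (hnn : ∀ u v, 0 ≤ w u v) (S : Finset V) (μ : ℝ) (h : IsEigenOn w S μ) : 0 ≤ μ := by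
  obtain ⟨g, hg0, hgsupp, heig⟩ := h
  have hq : ((gradSqOn w S g : ℝ) : ℂ) = (μ : ℂ) * ∑ v ∈ S, ((‖g v‖^2 : ℝ) : ℂ) := by
    rw [← quad_id w hsym S g, Finset.mul_sum]
    refine Finset.sum_congr rfl fun v hv => ?_
    rw [heig v hv]
    have : ((‖g v‖^2 : ℝ) : ℂ) = (starRingEnd ℂ) (g v) * (g v) := by
      exact_mod_cast (RCLike.conj_mul (g v)).symm
    rw [this]; ring
  have hq' : gradSqOn w S g = μ * ∑ v ∈ S, ‖g v‖^2 := by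
    exact_mod_cast hq
  have hpos : 0 < ∑ v ∈ S, ‖g v‖^2 := by
    obtain ⟨v, hv⟩ := Function.ne_iff.mp hg0
    have hvS : v ∈ S := by
      by_contra hvn
      exact hv (hgsupp v hvn)
    refine Finset.sum_pos' (fun u _ => sq_nonneg _) ⟨v, hvS, ?_⟩
    exact pow_pos (norm_pos_iff.mpr hv) 2
  nlinarith [gradSqOn_nonneg w hnn S g]

lemma lam_pos {V : Type*} (w : V → V → ℝ) (hsym : ∀ u v, w u v = w v u)
    (hnn : ∀ u v, 0 ≤ w u v) (S : Finset V) (lam : ℝ)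
    (hlam : IsLeast {μ : ℝ | μ ≠ 0 ∧ IsEigenOn w S μ} lam) : 0 < lam :=
  lt_of_le_of_ne (eigen_nonneg w hsym hnn S lam hlam.1.2) (Ne.symm hlam.1.1)

lemma spectral_gap {V : Type*} [Fintype V] [DecidableEq V] (w : V → V → ℝ)
    (hsym : ∀ u v, w u v = w v u) (hnn : ∀ u v, 0 ≤ w u v)
    (S : Finset V)
    (hconn : (SimpleGraph.fromRel fun u v : {x : V // x ∈ S} => w u.1 v.1 ≠ 0).Connected)
    (lam : ℝ) (hlam : IsLeast {μ : ℝ | μ ≠ 0 ∧ IsEigenOn w S μ} lam)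
    (h : V → ℂ) (hhsupp : ∀ v, v ∉ S → h v = 0) (hmean : ∑ v ∈ S, h v = 0) :
    lam * ∑ v ∈ S, ‖h v‖^2 ≤ gradSqOn w S h := by
  let T : EuclideanSpace ℂ V →ₗ[ℂ] EuclideanSpace ℂ V :=
  { toFun := fun g => WithLp.toLp 2 (fun v => if v ∈ S then ∑ u ∈ S, (g v - g u) * (w v u : ℂ) else 0 : V → ℂ)
    map_add' := fun x y => PiLp.ext fun v => by
      show (if v ∈ S then ∑ u ∈ S, ((x v + y v) - (x u + y u)) * (w v u : ℂ) else 0)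
        = (if v ∈ S then ∑ u ∈ S, (x v - x u) * (w v u : ℂ) else 0)
          + (if v ∈ S then ∑ u ∈ S, (y v - y u) * (w v u : ℂ) else 0)
      by_cases hv : v ∈ S
      · simp only [if_pos hv, ← Finset.sum_add_distrib]
        exact Finset.sum_congr rfl fun u _ => by ring
      · simp [hv]
    map_smul' := fun c x => PiLp.ext fun v => by
      show (if v ∈ S then ∑ u ∈ S, ((c * x v) - (c * x u)) * (w v u : ℂ) else 0)
        = c * (if v ∈ S then ∑ u ∈ S, (x v - x u) * (w v u : ℂ) else 0)
      by_cases hv : v ∈ S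
      · simp only [if_pos hv, Finset.mul_sum]
        exact Finset.sum_congr rfl fun u _ => by ring
      · simp [hv] }
  have hTapp : ∀ (g : EuclideanSpace ℂ V) (v : V),
      T g v = if v ∈ S then ∑ u ∈ S, (g v - g u) * (w v u : ℂ) else 0 := fun g v => rfl
  have expand : ∀ (x y : EuclideanSpace ℂ V),
      (inner ℂ x (T y) : ℂ)
        = ∑ v ∈ S, ∑ u ∈ S, (starRingEnd ℂ) (x v) * ((y v - y u) * (w v u : ℂ)) := by
    intro x y
    rw [PiLp.inner_apply]
    simp only [RCLike.inner_apply']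
    have e1 : ∀ v, (starRingEnd ℂ) (x v) * (T y) v
        = if v ∈ S then ∑ u ∈ S, (starRingEnd ℂ) (x v) * ((y v - y u) * (w v u : ℂ)) else 0 := by
      intro v
      rw [hTapp]
      split
      · rw [Finset.mul_sum]
      · exact mul_zero _
    simp_rw [e1]
    rw [Finset.sum_ite_mem, Finset.univ_inter]
  have hT : T.IsSymmetric := by
    intro x y
    rw [← inner_conj_symm (T x) y, expand y x, expand x y]
    simp only [map_sum, map_mul, map_sub, Complex.conj_conj, Complex.conj_ofReal]
    have split1 : ∑ v ∈ S, ∑ u ∈ S, (y v) * (((starRingEnd ℂ) (x v) - (starRingEnd ℂ) (x u)) * (w v u : ℂ))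
        = (∑ v ∈ S, ∑ u ∈ S, (starRingEnd ℂ) (x v) * y v * (w v u : ℂ))
          - ∑ v ∈ S, ∑ u ∈ S, (starRingEnd ℂ) (x u) * y v * (w v u : ℂ) := by
      rw [← Finset.sum_sub_distrib]
      refine Finset.sum_congr rfl fun v _ => ?_
      rw [← Finset.sum_sub_distrib]
      exact Finset.sum_congr rfl fun u _ => by ring
    have split2 : ∑ v ∈ S, ∑ u ∈ S, (starRingEnd ℂ) (x v) * ((y v - y u) * (w v u : ℂ))
        = (∑ v ∈ S, ∑ u ∈ S, (starRingEnd ℂ) (x v) * y v * (w v u : ℂ))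
          - ∑ v ∈ S, ∑ u ∈ S, (starRingEnd ℂ) (x v) * y u * (w v u : ℂ) := by
      rw [← Finset.sum_sub_distrib]
      refine Finset.sum_congr rfl fun v _ => ?_
      rw [← Finset.sum_sub_distrib]
      exact Finset.sum_congr rfl fun u _ => by ring
    have hBC : ∑ v ∈ S, ∑ u ∈ S, (starRingEnd ℂ) (x u) * y v * (w v u : ℂ)
        = ∑ v ∈ S, ∑ u ∈ S, (starRingEnd ℂ) (x v) * y u * (w v u : ℂ) := by
      rw [Finset.sum_comm]
      exact Finset.sum_congr rfl fun v _ => Finset.sum_congr rfl fun u _ => by rw [hsym u v]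
    rw [split1, split2, hBC]

  have inner_self_eq : ∀ x : EuclideanSpace ℂ V,
      (inner ℂ x (T x) : ℂ) = ((gradSqOn w S x : ℝ) : ℂ) := by
    intro x
    rw [expand x x, ← quad_id w hsym S x]
    exact Finset.sum_congr rfl fun v _ => (Finset.mul_sum _ _ _).symm
  have hconst : ∀ g : EuclideanSpace ℂ V, T g = 0 → ∀ v ∈ S, ∀ v' ∈ S, g v = g v' := by
    intro g hg
    have h0 : gradSqOn w S g = 0 := by
      have h1 := inner_self_eq g
      rw [hg, inner_zero_right] at h1
      exact_mod_cast h1.symm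
    have hterm : ∀ a ∈ S, ∀ b ∈ S, ‖g a - g b‖^2 * w a b = 0 := by
      have hs : ∑ a ∈ S, ∑ b ∈ S, ‖g a - g b‖^2 * w a b = 0 := by
        have h2 : (1/2 : ℝ) * ∑ a ∈ S, ∑ b ∈ S, ‖g a - g b‖^2 * w a b = 0 := h0
        linarith
      intro a ha b hb
      have h1 : ∀ a ∈ S, 0 ≤ ∑ b ∈ S, ‖g a - g b‖^2 * w a b := fun a _ =>
        Finset.sum_nonneg fun b _ => mul_nonneg (sq_nonneg _) (hnn a b)
      have h2 := (Finset.sum_eq_zero_iff_of_nonneg h1).mp hs a ha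
      exact (Finset.sum_eq_zero_iff_of_nonneg
        (fun b _ => mul_nonneg (sq_nonneg _) (hnn a b))).mp h2 b hb
    have hedge : ∀ a ∈ S, ∀ b ∈ S, w a b ≠ 0 → g a = g b := by
      intro a ha b hb hw
      rcases mul_eq_zero.mp (hterm a ha b hb) with h1 | h1
      · exact sub_eq_zero.mp (norm_eq_zero.mp (pow_eq_zero_iff two_ne_zero |>.mp h1))
      · exact absurd h1 hw
    have key : ∀ a b : {x : V // x ∈ S},
        (SimpleGraph.fromRel fun u v : {x : V // x ∈ S} => w u.1 v.1 ≠ 0).Walk a b →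
        g a.1 = g b.1 := by
      intro a b p
      induction p with
      | nil => rfl
      | cons hadj p ih =>
        refine Eq.trans ?_ ih
        rcases (SimpleGraph.fromRel_adj _ _ _).mp hadj with ⟨-, hr | hr⟩
        · exact hedge _ (Subtype.prop _) _ (Subtype.prop _) hr
        · exact hedge _ (Subtype.prop _) _ (Subtype.prop _) (by rw [hsym]; exact hr)
    intro v hv v' hv'
    exact key ⟨v, hv⟩ ⟨v', hv'⟩ (hconn.preconnected ⟨v, hv⟩ ⟨v', hv'⟩).some
  have hn : Module.finrank ℂ (EuclideanSpace ℂ V) = Fintype.card V := finrank_euclideanSpace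
  set b := hT.eigenvectorBasis hn with hb
  set mu := hT.eigenvalues hn with hmu
  have hE : ∀ i, T (b i) = (mu i : ℂ) • b i := fun i => hT.apply_eigenvectorBasis hn i
  set h' : EuclideanSpace ℂ V := WithLp.toLp 2 h with hh'
  set c : Fin (Fintype.card V) → ℂ := fun i => inner ℂ (b i) h' with hc
  have P1 : ∑ i, ‖c i‖^2 = ∑ v ∈ S, ‖h v‖^2 := by
    have e1 : (inner ℂ h' h' : ℂ) = ∑ i, ((‖c i‖^2 : ℝ) : ℂ) := by
      rw [← OrthonormalBasis.sum_inner_mul_inner b h' h']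
      refine Finset.sum_congr rfl fun i _ => ?_
      rw [← inner_conj_symm h' (b i)]
      exact_mod_cast RCLike.conj_mul (c i)
    have e2 : (inner ℂ h' h' : ℂ) = ∑ v ∈ S, ((‖h v‖^2 : ℝ) : ℂ) := by
      rw [PiLp.inner_apply]
      simp only [RCLike.inner_apply']
      rw [← Finset.sum_subset (Finset.subset_univ S)
        (fun v _ hv => by rw [show h' v = 0 from hhsupp v hv]; simp)]
      exact Finset.sum_congr rfl fun v _ => by exact_mod_cast RCLike.conj_mul (h v)
    have := e1.symm.trans e2
    exact_mod_cast this
  have P2 : (inner ℂ h' (T h') : ℂ) = ∑ i, ((mu i * ‖c i‖^2 : ℝ) : ℂ) := by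
    rw [← OrthonormalBasis.sum_inner_mul_inner b h' (T h')]
    refine Finset.sum_congr rfl fun i _ => ?_
    have e3 : (inner ℂ (b i) (T h') : ℂ) = (mu i : ℂ) * c i := by
      rw [← hT (b i) h', hE i, inner_smul_left, Complex.conj_ofReal]
    rw [e3, ← inner_conj_symm h' (b i)]
    have hcc : (starRingEnd ℂ) (c i) * c i = ((‖c i‖^2 : ℝ) : ℂ) := by
      exact_mod_cast RCLike.conj_mul (c i)
    calc (starRingEnd ℂ) (c i) * ((mu i : ℂ) * c i)
        = (mu i : ℂ) * ((starRingEnd ℂ) (c i) * c i) := by ring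
      _ = (mu i : ℂ) * ((‖c i‖^2 : ℝ) : ℂ) := by rw [hcc]
      _ = ((mu i * ‖c i‖^2 : ℝ) : ℂ) := by push_cast; ring
  have P3 : ∀ i, lam * ‖c i‖^2 ≤ mu i * ‖c i‖^2 := by
    intro i
    by_cases hmu0 : mu i = 0
    · have hker : T (b i) = 0 := by rw [hE i, hmu0]; simp
      have hc0 : c i = 0 := by
        obtain ⟨⟨v0, hv0⟩⟩ := hconn.nonempty
        have hbc : ∀ v ∈ S, b i v = b i v0 := fun v hv => hconst (b i) hker v hv v0 hv0
        show (inner ℂ (b i) h' : ℂ) = 0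
        rw [PiLp.inner_apply]
        simp only [RCLike.inner_apply']
        rw [← Finset.sum_subset (Finset.subset_univ S)
          (fun v _ hv => by rw [show h' v = 0 from hhsupp v hv]; simp)]
        calc ∑ v ∈ S, (starRingEnd ℂ) (b i v) * h' v
            = ∑ v ∈ S, (starRingEnd ℂ) (b i v0) * h v :=
              Finset.sum_congr rfl fun v hv => by rw [hbc v hv]
          _ = (starRingEnd ℂ) (b i v0) * ∑ v ∈ S, h v := (Finset.mul_sum _ _ _).symm
          _ = 0 := by rw [hmean, mul_zero]
      rw [hmu0, hc0]
      simp
    · have heig : IsEigenOn w S (mu i) := by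
        refine ⟨b i, ?_, ?_, ?_⟩
        · intro h0
          exact b.orthonormal.ne_zero i (by ext v; exact congrFun h0 v)
        · intro v hv
          have h1 : T (b i) v = 0 := by rw [hTapp]; exact if_neg hv
          rw [hE i] at h1
          have h2 : (mu i : ℂ) * b i v = 0 := h1
          rcases mul_eq_zero.mp h2 with h3 | h3
          · exact absurd (by exact_mod_cast h3) hmu0
          · exact h3
        · intro v hv
          have h1 : T (b i) v = if v ∈ S then ∑ u ∈ S, (b i v - b i u) * (w v u : ℂ) else 0 :=
            hTapp _ _
          rw [hE i, if_pos hv] at h1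
          exact h1.symm
      have hle := hlam.2 ⟨hmu0, heig⟩
      exact mul_le_mul_of_nonneg_right hle (sq_nonneg _)
  have e4 : ∑ i, (mu i * ‖c i‖^2) = gradSqOn w S h := by
    have e5 := (inner_self_eq h').symm.trans P2
    exact_mod_cast e5.symm
  calc lam * ∑ v ∈ S, ‖h v‖^2 = ∑ i, lam * ‖c i‖^2 := by rw [← P1, Finset.mul_sum]
    _ ≤ ∑ i, mu i * ‖c i‖^2 := Finset.sum_le_sum fun i _ => P3 i
    _ = gradSqOn w S h := e4

lemma per_part {V : Type*} [Fintype V] [DecidableEq V] (w : V → V → ℝ)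
    (hsym : ∀ u v, w u v = w v u) (hnn : ∀ u v, 0 ≤ w u v)
    (S : Finset V) (hS : S.Nonempty)
    (hconn : (SimpleGraph.fromRel fun u v : {x : V // x ∈ S} => w u.1 v.1 ≠ 0).Connected)
    (ψ : V → ℂ) (hΨχ : PsiOn S ψ (fun _ => 1) ≠ 0)
    (lam : ℝ) (hlam : IsLeast {μ : ℝ | μ ≠ 0 ∧ IsEigenOn w S μ} lam)
    (f : V → ℂ) (hker : PsiOn S ψ f = 0) :
    ∑ v ∈ S, ‖f v‖^2 ≤ ((S.card : ℝ) * (∑ v ∈ S, ‖ψ v‖ ^ 2)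
      / ‖PsiOn S ψ (fun _ => 1)‖ ^ 2) / lam * gradSqOn w S f := by
  have hcard0 : (0 : ℝ) < (S.card : ℝ) := by exact_mod_cast Finset.card_pos.mpr hS
  have hcardC : (S.card : ℂ) ≠ 0 := by exact_mod_cast hcard0.ne'
  obtain ⟨cc, hccsum⟩ : ∃ cc : ℂ, ∑ v ∈ S, f v = (S.card : ℂ) * cc :=
    ⟨(∑ v ∈ S, f v) / (S.card : ℂ), by field_simp⟩
  set h : V → ℂ := fun v => if v ∈ S then f v - cc else 0 with hhdef
  have hhsupp : ∀ v, v ∉ S → h v = 0 := fun v hv => if_neg hv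
  have hhS : ∀ v ∈ S, h v = f v - cc := fun v hv => if_pos hv
  have hfS : ∀ v ∈ S, f v = h v + cc := fun v hv => by rw [hhS v hv]; ring
  have hmean : ∑ v ∈ S, h v = 0 := by
    rw [Finset.sum_congr rfl hhS, Finset.sum_sub_distrib, Finset.sum_const, nsmul_eq_mul,
      hccsum, sub_self]
  have hgrad : gradSqOn w S h = gradSqOn w S f := by
    unfold gradSqOn
    congr 1
    refine Finset.sum_congr rfl fun u hu => Finset.sum_congr rfl fun v hv => ?_
    rw [hhS u hu, hhS v hv, sub_sub_sub_cancel_right]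
  set H : ℝ := ∑ v ∈ S, ‖h v‖^2 with hHdef
  have hH0 : 0 ≤ H := Finset.sum_nonneg fun v _ => sq_nonneg _
  -- Pythagoras
  have hsplitC : ∑ v ∈ S, ((‖f v‖^2 : ℝ) : ℂ)
      = ∑ v ∈ S, ((‖h v‖^2 : ℝ) : ℂ) + (S.card : ℂ) * ((‖cc‖^2 : ℝ) : ℂ) := by
    have e1 : ∑ v ∈ S, ((‖f v‖^2 : ℝ) : ℂ)
        = ∑ v ∈ S, ((starRingEnd ℂ) (h v) * h v + (starRingEnd ℂ) cc * cc)
          + ((starRingEnd ℂ) cc * ∑ v ∈ S, h v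
            + (starRingEnd ℂ) (∑ v ∈ S, h v) * cc) := by
      rw [Finset.mul_sum, map_sum, Finset.sum_mul, ← Finset.sum_add_distrib,
        ← Finset.sum_add_distrib]
      refine Finset.sum_congr rfl fun v hv => ?_
      have : ((‖f v‖^2 : ℝ) : ℂ) = (starRingEnd ℂ) (f v) * f v := by
        exact_mod_cast (RCLike.conj_mul (f v)).symm
      rw [this, hfS v hv, map_add]
      ring
    rw [e1, hmean] at *
    simp only [map_zero, mul_zero, zero_mul, add_zero]
    rw [Finset.sum_add_distrib, Finset.sum_const, nsmul_eq_mul]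
    congr 1
    · exact Finset.sum_congr rfl fun v _ => by exact_mod_cast RCLike.conj_mul (h v)
    · congr 1
      exact_mod_cast RCLike.conj_mul cc
  have hsplit : ∑ v ∈ S, ‖f v‖^2 = H + (S.card : ℝ) * ‖cc‖^2 := by exact_mod_cast hsplitC
  -- the mean of ψ
  obtain ⟨m, hψsum⟩ : ∃ m : ℂ, ∑ v ∈ S, ψ v = (S.card : ℂ) * m :=
    ⟨(∑ v ∈ S, ψ v) / (S.card : ℂ), by field_simp⟩
  set Pχ : ℂ := PsiOn S ψ (fun _ => 1) with hPdef
  have hPχ : Pχ = (starRingEnd ℂ) (∑ v ∈ S, ψ v) := by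
    rw [hPdef, PsiOn, map_sum]
    exact Finset.sum_congr rfl fun v _ => one_mul _
  have hP2pos : (0 : ℝ) < ‖Pχ‖^2 := pow_pos (norm_pos_iff.mpr hΨχ) 2
  -- the kernel condition gives the key bound
  have hkey : cc * Pχ = -∑ v ∈ S, h v * (starRingEnd ℂ) (ψ v - m) := by
    have e2 : ∑ v ∈ S, h v * (starRingEnd ℂ) (ψ v - m)
        = ∑ v ∈ S, h v * (starRingEnd ℂ) (ψ v) := by
      simp only [map_sub, mul_sub]
      rw [Finset.sum_sub_distrib, ← Finset.sum_mul, hmean, zero_mul, sub_zero]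
    rw [e2]
    have e3 : (0 : ℂ) = ∑ v ∈ S, h v * (starRingEnd ℂ) (ψ v) + cc * Pχ := by
      rw [← hker, PsiOn, hPdef, PsiOn, Finset.mul_sum, ← Finset.sum_add_distrib]
      refine Finset.sum_congr rfl fun v hv => ?_
      rw [hfS v hv]
      ring
    linear_combination -e3
  -- Cauchy-Schwarz
  set M : ℝ := ∑ v ∈ S, ‖ψ v - m‖^2 with hMdef
  have hCS : ‖cc‖^2 * ‖Pχ‖^2 ≤ H * M := by
    have e4 : ‖cc * Pχ‖ ≤ ∑ v ∈ S, ‖h v‖ * ‖ψ v - m‖ := by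
      rw [hkey, norm_neg]
      refine (norm_sum_le _ _).trans ?_
      refine Finset.sum_le_sum fun v _ => ?_
      rw [norm_mul, RCLike.norm_conj]
    have e5 : (∑ v ∈ S, ‖h v‖ * ‖ψ v - m‖)^2 ≤ H * M := by
      rw [hHdef, hMdef]
      have := Finset.sum_mul_sq_le_sq_mul_sq S (fun v => ‖h v‖) (fun v => ‖ψ v - m‖)
      simpa using this
    have e6 : ‖cc * Pχ‖^2 ≤ H * M := by
      refine le_trans ?_ e5
      have h1 : (0:ℝ) ≤ ‖cc * Pχ‖ := norm_nonneg _
      nlinarith [e4]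
    rw [norm_mul] at e6
    nlinarith [e6]
  -- compute M
  have hconjm : (starRingEnd ℂ) m * m = ((‖m‖^2 : ℝ) : ℂ) := by
    exact_mod_cast RCLike.conj_mul m
  have hMC : ∑ v ∈ S, ((‖ψ v - m‖^2 : ℝ) : ℂ)
      = ∑ v ∈ S, ((‖ψ v‖^2 : ℝ) : ℂ) - (S.card : ℂ) * ((‖m‖^2 : ℝ) : ℂ) := by
    have e7 : ∀ v ∈ S, ((‖ψ v - m‖^2 : ℝ) : ℂ)
        = ((‖ψ v‖^2 : ℝ) : ℂ) - ((starRingEnd ℂ) (ψ v) * m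
            + (starRingEnd ℂ) m * ψ v - (starRingEnd ℂ) m * m) := by
      intro v _
      have e7a : ((‖ψ v - m‖^2 : ℝ) : ℂ) = (starRingEnd ℂ) (ψ v - m) * (ψ v - m) := by
        exact_mod_cast (RCLike.conj_mul (ψ v - m)).symm
      have e7b : ((‖ψ v‖^2 : ℝ) : ℂ) = (starRingEnd ℂ) (ψ v) * ψ v := by
        exact_mod_cast (RCLike.conj_mul (ψ v)).symm
      rw [e7a, e7b, map_sub]
      ring
    rw [Finset.sum_congr rfl e7, Finset.sum_sub_distrib]
    congr 1
    rw [Finset.sum_sub_distrib, Finset.sum_add_distrib, ← Finset.sum_mul, ← Finset.mul_sum,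
      ← map_sum, Finset.sum_const, nsmul_eq_mul, hψsum, map_mul, hconjm]
    have e10 : (starRingEnd ℂ) ((S.card : ℂ)) = (S.card : ℂ) := by simp
    rw [e10]
    rw [show (starRingEnd ℂ) m * ((S.card : ℂ) * m)
      = (S.card : ℂ) * ((starRingEnd ℂ) m * m) by ring, hconjm]
    rw [mul_assoc, hconjm]
    ring
  have hM : M = (∑ v ∈ S, ‖ψ v‖^2) - (S.card : ℝ) * ‖m‖^2 := by
    rw [hMdef]; exact_mod_cast hMC
  have hPm : ‖Pχ‖^2 = (S.card : ℝ)^2 * ‖m‖^2 := by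
    rw [hPχ, hψsum, RCLike.norm_conj, norm_mul]
    have : ‖(S.card : ℂ)‖ = (S.card : ℝ) := by
      simp
    rw [this]
    ring
  -- combine
  set Sψ : ℝ := ∑ v ∈ S, ‖ψ v‖^2 with hSψdef
  have key2 : (∑ v ∈ S, ‖f v‖^2) * ‖Pχ‖^2 ≤ ((S.card : ℝ) * Sψ) * H := by
    rw [hsplit]
    have h1 := mul_le_mul_of_nonneg_left hCS hcard0.le
    rw [hM] at h1
    rw [hPm] at h1 ⊢
    nlinarith [h1, hH0, hcard0, sq_nonneg ‖m‖]
  have step1 : ∑ v ∈ S, ‖f v‖^2 ≤ (S.card : ℝ) * Sψ / ‖Pχ‖^2 * H := by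
    rw [div_mul_eq_mul_div, le_div_iff₀ hP2pos]
    linarith [key2]
  have hlampos := lam_pos w hsym hnn S lam hlam
  have hgap := spectral_gap w hsym hnn S hconn lam hlam h hhsupp hmean
  rw [hgrad] at hgap
  have hθ0 : 0 ≤ (S.card : ℝ) * Sψ / ‖Pχ‖^2 := by
    apply div_nonneg _ (sq_nonneg _)
    apply mul_nonneg hcard0.le
    exact Finset.sum_nonneg fun v _ => sq_nonneg _
  calc ∑ v ∈ S, ‖f v‖^2 ≤ (S.card : ℝ) * Sψ / ‖Pχ‖^2 * H := step1
    _ ≤ (S.card : ℝ) * Sψ / ‖Pχ‖^2 * (gradSqOn w S f / lam) := by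
        refine mul_le_mul_of_nonneg_left ?_ hθ0
        rw [le_div_iff₀ hlampos]
        linarith [hgap]
    _ = (S.card : ℝ) * Sψ / ‖Pχ‖^2 / lam * gradSqOn w S f := by ring

theorem poincare_annihilating_functionals
    {V : Type*} [Fintype V] {J : Type*} [Fintype J] (w : V → V → ℝ)
    (hsym : ∀ u v, w u v = w v u) (hnn : ∀ u v, 0 ≤ w u v) (hdiag : ∀ v, w v v = 0)
    (S : J → Finset V)
    (hcover : ∀ v : V, ∃ j, v ∈ S j)
    (hdisj : ∀ i j, i ≠ j → Disjoint (S i) (S j))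
    (hcard : ∀ j, 1 < (S j).card)
    (hconn : ∀ j, IndConnected w (S j))
    (ψ : J → V → ℂ) (hsupp : ∀ j v, v ∉ S j → ψ j v = 0)
    (hΨχ : ∀ j, PsiOn (S j) (ψ j) (fun _ => 1) ≠ 0)
    (lam : J → ℝ)
    (hlam : ∀ j, IsLeast {μ : ℝ | μ ≠ 0 ∧ IsEigenOn w (S j) μ} (lam j))
    (Θ Λ : ℝ)
    (hΘ : IsLUB (Set.range fun j => ((S j).card : ℝ) * (∑ v ∈ S j, ‖ψ j v‖ ^ 2)
          / ‖PsiOn (S j) (ψ j) (fun _ => 1)‖ ^ 2) Θ)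
    (hΛ : IsGLB (Set.range lam) Λ) (hΛpos : 0 < Λ)
    (f : V → ℂ) (hker : ∀ j, PsiOn (S j) (ψ j) f = 0) :
    normSq f ≤ ∑ j, (((S j).card : ℝ) * (∑ v ∈ S j, ‖ψ j v‖ ^ 2)
          / ‖PsiOn (S j) (ψ j) (fun _ => 1)‖ ^ 2) / lam j * gradSqOn w (S j) f
      ∧ normSq f ≤ (Θ / Λ) * (gip f (lap w f)).re := by
  classical
  cases isEmpty_or_nonempty J with
  | inl hJ =>
    have hVempty : IsEmpty V := ⟨fun v => (hcover v).elim (fun j _ => hJ.false j)⟩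
    constructor
    · simp [normSq, Finset.univ_eq_empty]
    · simp [normSq, gip, Finset.univ_eq_empty]
  | inr hJ =>
    set θ : J → ℝ := fun j => ((S j).card : ℝ) * (∑ v ∈ S j, ‖ψ j v‖ ^ 2)
          / ‖PsiOn (S j) (ψ j) (fun _ => 1)‖ ^ 2 with hθdef
    have hSne : ∀ j, (S j).Nonempty := fun j =>
      Finset.card_pos.mp (Nat.zero_lt_of_lt (hcard j))
    have perj : ∀ j, ∑ v ∈ S j, ‖f v‖^2 ≤ θ j / lam j * gradSqOn w (S j) f := fun j =>
      per_part w hsym hnn (S j) (hSne j) (hconn j) (ψ j) (hΨχ j) (lam j) (hlam j) f (hker j)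
    have hbiU : Finset.univ.biUnion S = (Finset.univ : Finset V) := by
      ext v
      simpa using hcover v
    have hnormsplit : normSq f = ∑ j, ∑ v ∈ S j, ‖f v‖^2 := by
      rw [normSq, ← hbiU, Finset.sum_biUnion]
      intro i _ j _ hij
      exact hdisj i j hij
    have first : normSq f ≤ ∑ j, θ j / lam j * gradSqOn w (S j) f := by
      rw [hnormsplit]
      exact Finset.sum_le_sum fun j _ => perj j
    refine ⟨first, ?_⟩
    -- second inequality
    have hθle : ∀ j, θ j ≤ Θ := fun j => hΘ.1 ⟨j, rfl⟩
    have hθ0 : ∀ j, 0 ≤ θ j := fun j => by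
      apply div_nonneg _ (sq_nonneg _)
      exact mul_nonneg (Nat.cast_nonneg _) (Finset.sum_nonneg fun v _ => sq_nonneg _)
    have hΘ0 : 0 ≤ Θ := le_trans (hθ0 hJ.some) (hθle hJ.some)
    have hΛle : ∀ j, Λ ≤ lam j := fun j => hΛ.1 ⟨j, rfl⟩
    have step2 : ∑ j, θ j / lam j * gradSqOn w (S j) f
        ≤ (Θ / Λ) * ∑ j, gradSqOn w (S j) f := by
      rw [Finset.mul_sum]
      refine Finset.sum_le_sum fun j _ => ?_
      exact mul_le_mul_of_nonneg_right
        (div_le_div₀ hΘ0 (hθle j) hΛpos (hΛle j)) (gradSqOn_nonneg w hnn (S j) f)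
    have hgip : gip f (lap w f) = ((gradSqOn w Finset.univ f : ℝ) : ℂ) := by
      have h1 := quad_id w hsym Finset.univ f
      have h2 : gip f (lap w f) = (starRingEnd ℂ)
          (∑ v, (starRingEnd ℂ) (f v) * (∑ u, (f v - f u) * (w v u : ℂ))) := by
        rw [map_sum, gip]
        refine Finset.sum_congr rfl fun v _ => ?_
        rw [map_mul, Complex.conj_conj]
        rfl
      rw [h2, h1, Complex.conj_ofReal]
    have hre : (gip f (lap w f)).re = gradSqOn w Finset.univ f := by
      rw [hgip]
      exact Complex.ofReal_re _
    have gradsum : ∑ j, gradSqOn w (S j) f ≤ gradSqOn w Finset.univ f := by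
      have hform : ∀ T : Finset V, gradSqOn w T f
          = (1/2) * ∑ p ∈ T ×ˢ T, ‖f p.1 - f p.2‖^2 * w p.1 p.2 := by
        intro T
        rw [gradSqOn, Finset.sum_product]
      have hsub : (Finset.univ.biUnion fun j => (S j) ×ˢ (S j))
          ⊆ (Finset.univ : Finset V) ×ˢ (Finset.univ : Finset V) := by
        intro p _
        simp [Finset.mem_product]
      have hdisj2 : ∀ i ∈ (Finset.univ : Finset J), ∀ j ∈ (Finset.univ : Finset J), i ≠ j →
          Disjoint ((S i) ×ˢ (S i)) ((S j) ×ˢ (S j)) := by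
        intro i _ j _ hij
        refine Finset.disjoint_left.mpr fun p hp hq => ?_
        exact (Finset.disjoint_left.mp (hdisj i j hij))
          (Finset.mem_product.mp hp).1 (Finset.mem_product.mp hq).1
      have hmain : ∑ j, ∑ p ∈ (S j) ×ˢ (S j), ‖f p.1 - f p.2‖^2 * w p.1 p.2
          ≤ ∑ p ∈ (Finset.univ : Finset V) ×ˢ (Finset.univ : Finset V),
            ‖f p.1 - f p.2‖^2 * w p.1 p.2 := by
        rw [← Finset.sum_biUnion hdisj2]
        exact Finset.sum_le_sum_of_subset_of_nonneg hsub
          (fun p _ _ => mul_nonneg (sq_nonneg _) (hnn p.1 p.2))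
      calc ∑ j, gradSqOn w (S j) f
          = (1/2) * ∑ j, ∑ p ∈ (S j) ×ˢ (S j), ‖f p.1 - f p.2‖^2 * w p.1 p.2 := by
            rw [Finset.mul_sum]
            exact Finset.sum_congr rfl fun j _ => hform (S j)
        _ ≤ (1/2) * ∑ p ∈ (Finset.univ : Finset V) ×ˢ (Finset.univ : Finset V),
              ‖f p.1 - f p.2‖^2 * w p.1 p.2 := by
            exact mul_le_mul_of_nonneg_left hmain (by norm_num)
        _ = gradSqOn w Finset.univ f := (hform Finset.univ).symm
    calc normSq f ≤ ∑ j, θ j / lam j * gradSqOn w (S j) f := first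
      _ ≤ (Θ / Λ) * ∑ j, gradSqOn w (S j) f := step2
      _ ≤ (Θ / Λ) * (gip f (lap w f)).re := by
          rw [hre]
          exact mul_le_mul_of_nonneg_left gradsum (div_nonneg hΘ0 hΛpos.le)
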